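/- In the free magmatic algebra with two binary operations ≺ and ≻ subject to the single relation (x≻y)≺z = x≻(y≺z), the dimension of the component of arity n (multilinear part on one generator, or equivalently the number of basis monomials with n leaves in the free algebra on one generator) equals the number of bicolored complete binary trees with n leaves having no right edge from a ≻-colored vertex to a ≺-colored vertex; for n = 1,2,3,4,5 these numbers are 1, 2, 7, 30, 143. -/

import Mathlib

/-- Monomials of the free algebra on one generator `x` with two binary operations
`≺` (constructor `p`) and `≻` (constructor `s`): complete binary trees whose
internal vertices are bicolored by `≺`/`≻`. -/
inductive LTerm : Type
  | x : LTerm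
  | p : LTerm → LTerm → LTerm
  | s : LTerm → LTerm → LTerm

/-- Number of leaves of a monomial. -/
def LTerm.leaves : LTerm → ℕ
  | .x => 1
  | .p a b => a.leaves + b.leaves
  | .s a b => a.leaves + b.leaves

/-- One rewriting step: the defining relation `(a ≻ b) ≺ c = a ≻ (b ≺ c)`
applied in any context (congruence). -/
inductive LStep : LTerm → LTerm → Prop
  | base (a b c : LTerm) : LStep (.p (.s a b) c) (.s a (.p b c))
  | pl {a a' : LTerm} (b : LTerm) : LStep a a' → LStep (.p a b) (.p a' b)
  | pr (a : LTerm) {b b' : LTerm} : LStep b b' → LStep (.p a b) (.p a b')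
  | sl {a a' : LTerm} (b : LTerm) : LStep a a' → LStep (.s a b) (.s a' b)
  | sr (a : LTerm) {b b' : LTerm} : LStep b b' → LStep (.s a b) (.s a b')

/-- Is the top operation `≺` ? -/
def LTerm.isP : LTerm → Prop
  | .p _ _ => True
  | _ => False

/-- A monomial avoids the forbidden configuration: no right edge from a
`≻`-colored vertex to a `≺`-colored vertex. -/
def LTerm.Avoids : LTerm → Prop
  | .x => True
  | .p a b => a.Avoids ∧ b.Avoids
  | .s a b => a.Avoids ∧ b.Avoids ∧ ¬ b.isP

/-- Dimension of the arity-`n` (i.e. `n`-leaves) component of the free algebra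
with operations `≺, ≻` subject to `(x≻y)≺z = x≻(y≺z)`: the number of monomials
with `n` leaves modulo the congruence generated by the relation. -/
noncomputable def LDim (n : ℕ) : ℕ :=
  Nat.card (Quotient (Setoid.comap (Subtype.val : {t : LTerm // t.leaves = n} → LTerm)
    (Relation.EqvGen.setoid LStep)))

/-- Number of bicolored complete binary trees with `n` leaves avoiding right
edges from `≻` to `≺`. -/
noncomputable def AvoidCount (n : ℕ) : ℕ :=
  Nat.card {t : LTerm // t.leaves = n ∧ t.Avoids}

deriving instance DecidableEq for LTerm

namespace LAux

open LTerm

lemma leaves_pos (t : LTerm) : 1 ≤ t.leaves := by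
  induction t with
  | x => simp [LTerm.leaves]
  | p a b ha hb => simp [LTerm.leaves]; omega
  | s a b ha hb => simp [LTerm.leaves]; omega

/-- normal form combination for `s a b`, pushing `p`'s out of the right child -/
def sN (a : LTerm) : LTerm → LTerm
  | .p u v => .p (sN a u) v
  | b => .s a b

def nf : LTerm → LTerm
  | .x => .x
  | .p a b => .p (nf a) (nf b)
  | .s a b => sN (nf a) (nf b)

lemma sN_leaves (a b : LTerm) : (sN a b).leaves = a.leaves + b.leaves := by
  induction b generalizing a with
  | x => simp [sN, LTerm.leaves]
  | p u v hu hv => simp [sN, LTerm.leaves, hu]; omega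
  | s u v hu hv => simp [sN, LTerm.leaves]

lemma nf_leaves (t : LTerm) : (nf t).leaves = t.leaves := by
  induction t with
  | x => rfl
  | p a b ha hb => simp [nf, LTerm.leaves, ha, hb]
  | s a b ha hb => simp [nf, sN_leaves, LTerm.leaves, ha, hb]

lemma sN_avoids {a b : LTerm} (ha : a.Avoids) (hb : b.Avoids) : (sN a b).Avoids := by
  induction b generalizing a with
  | x => exact ⟨ha, trivial, fun h => h⟩
  | p u v hu hv =>
      obtain ⟨h1, h2⟩ := hb
      exact ⟨hu ha h1, h2⟩
  | s u v hu hv => exact ⟨ha, hb, fun h => h⟩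

lemma nf_avoids (t : LTerm) : (nf t).Avoids := by
  induction t with
  | x => trivial
  | p a b ha hb => exact ⟨ha, hb⟩
  | s a b ha hb => exact sN_avoids ha hb

lemma sN_of_not_isP {a b : LTerm} (hb : ¬ b.isP) : sN a b = .s a b := by
  cases b with
  | x => rfl
  | p u v => exact absurd trivial hb
  | s u v => rfl

lemma nf_of_avoids {t : LTerm} (h : t.Avoids) : nf t = t := by
  induction t with
  | x => rfl
  | p a b ha hb => simp [nf, ha h.1, hb h.2]
  | s a b ha hb =>
      simp [nf, ha h.1, hb h.2.1, sN_of_not_isP h.2.2]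

open Relation

lemma eqv_pl {a a' : LTerm} (b : LTerm) (h : EqvGen LStep a a') :
    EqvGen LStep (.p a b) (.p a' b) := by
  induction h with
  | rel _ _ h => exact EqvGen.rel _ _ (LStep.pl b h)
  | refl _ => exact EqvGen.refl _
  | symm _ _ _ ih => exact ih.symm _ _
  | trans _ _ _ _ _ ih1 ih2 => exact ih1.trans _ _ _ ih2

lemma eqv_pr (a : LTerm) {b b' : LTerm} (h : EqvGen LStep b b') :
    EqvGen LStep (.p a b) (.p a b') := by
  induction h with
  | rel _ _ h => exact EqvGen.rel _ _ (LStep.pr a h)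
  | refl _ => exact EqvGen.refl _
  | symm _ _ _ ih => exact ih.symm _ _
  | trans _ _ _ _ _ ih1 ih2 => exact ih1.trans _ _ _ ih2

lemma eqv_sl {a a' : LTerm} (b : LTerm) (h : EqvGen LStep a a') :
    EqvGen LStep (.s a b) (.s a' b) := by
  induction h with
  | rel _ _ h => exact EqvGen.rel _ _ (LStep.sl b h)
  | refl _ => exact EqvGen.refl _
  | symm _ _ _ ih => exact ih.symm _ _
  | trans _ _ _ _ _ ih1 ih2 => exact ih1.trans _ _ _ ih2

lemma eqv_sr (a : LTerm) {b b' : LTerm} (h : EqvGen LStep b b') :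
    EqvGen LStep (.s a b) (.s a b') := by
  induction h with
  | rel _ _ h => exact EqvGen.rel _ _ (LStep.sr a h)
  | refl _ => exact EqvGen.refl _
  | symm _ _ _ ih => exact ih.symm _ _
  | trans _ _ _ _ _ ih1 ih2 => exact ih1.trans _ _ _ ih2

lemma eqv_sN (a b : LTerm) : EqvGen LStep (.s a b) (sN a b) := by
  induction b generalizing a with
  | x => exact EqvGen.refl _
  | p u v hu hv =>
      have h1 : EqvGen LStep (.s a (.p u v)) (.p (.s a u) v) :=
        (EqvGen.rel _ _ (LStep.base a u v)).symm _ _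
      exact h1.trans _ _ _ (eqv_pl v (hu a))
  | s u v hu hv => exact EqvGen.refl _

lemma eqv_nf (t : LTerm) : EqvGen LStep t (nf t) := by
  induction t with
  | x => exact EqvGen.refl _
  | p a b ha hb => exact (eqv_pl b ha).trans _ _ _ (eqv_pr (nf a) hb)
  | s a b ha hb =>
      exact ((eqv_sl b ha).trans _ _ _ (eqv_sr (nf a) hb)).trans _ _ _
        (eqv_sN (nf a) (nf b))

lemma nf_step {t u : LTerm} (h : LStep t u) : nf t = nf u := by
  induction h with
  | base a b c => simp [nf, sN]
  | pl b _ ih => simp [nf, ih]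
  | pr a _ ih => simp [nf, ih]
  | sl b _ ih => simp [nf, ih]
  | sr a _ ih => simp [nf, ih]

lemma nf_eqv {t u : LTerm} (h : Relation.EqvGen LStep t u) : nf t = nf u := by
  induction h with
  | rel _ _ h => exact nf_step h
  | refl _ => rfl
  | symm _ _ _ ih => exact ih.symm
  | trans _ _ _ _ _ ih1 ih2 => exact ih1.trans ih2

/-- The bijection between the quotient and avoiding trees. -/
noncomputable def quotEquiv (n : ℕ) :
    Quotient (Setoid.comap (Subtype.val : {t : LTerm // t.leaves = n} → LTerm)
      (Relation.EqvGen.setoid LStep)) ≃ {t : LTerm // t.leaves = n ∧ t.Avoids} where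
  toFun := Quotient.lift
      (fun t => (⟨nf t.1, by rw [nf_leaves]; exact t.2, nf_avoids t.1⟩ :
        {t : LTerm // t.leaves = n ∧ t.Avoids}))
      (fun a b h => Subtype.ext (nf_eqv h))
  invFun := fun t => Quotient.mk _ ⟨t.1, t.2.1⟩
  left_inv := by
    refine Quotient.ind (fun t => ?_)
    exact Quotient.sound ((eqv_nf t.1).symm _ _)
  right_inv := fun t => Subtype.ext (nf_of_avoids t.2.2)

lemma ldim_eq (n : ℕ) : LDim n = AvoidCount n :=
  Nat.card_congr (quotEquiv n)

/- ### enumeration -/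

def avoidsB : LTerm → Bool
  | .x => true
  | .p a b => avoidsB a && avoidsB b
  | .s a b => avoidsB a && avoidsB b &&
      !(match b with | .p _ _ => true | _ => false)

lemma avoids_iff (t : LTerm) : t.Avoids ↔ avoidsB t = true := by
  induction t with
  | x => simp [LTerm.Avoids, avoidsB]
  | p a b ha hb => simp [LTerm.Avoids, avoidsB, ha, hb]
  | s a b ha hb =>
      cases b with
      | x => simp_all [LTerm.Avoids, avoidsB, LTerm.isP]
      | p u v => simp_all [LTerm.Avoids, avoidsB, LTerm.isP]
      | s u v => simp_all [LTerm.Avoids, avoidsB, LTerm.isP]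

def mkNext (L : List (List LTerm)) : List LTerm :=
  (List.range L.length).flatMap fun i =>
    (L.getD i []).flatMap fun a =>
      (L.getD (L.length - 1 - i) []).flatMap fun b =>
        [.p a b, .s a b]

def table : ℕ → List (List LTerm)
  | 0 => []
  | 1 => [[.x]]
  | n+2 => table (n+1) ++ [mkNext (table (n+1))]

lemma table_length (n : ℕ) : (table n).length = n := by
  induction n with
  | zero => rfl
  | succ k ih =>
      cases k with
      | zero => rfl
      | succ m => simp [table]; rw [show (table (m+1)).length = m+1 from ih]

lemma mem_mkNext {L : List (List LTerm)} {t : LTerm} :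
    t ∈ mkNext L ↔ ∃ i < L.length, ∃ a ∈ L.getD i [],
      ∃ b ∈ L.getD (L.length - 1 - i) [], t = .p a b ∨ t = .s a b := by
  simp only [mkNext, List.mem_flatMap, List.mem_range, List.mem_cons,
    List.mem_singleton, List.not_mem_nil, or_false]

lemma getD_snoc {α : Type*} (l : List α) (a d : α) {m : ℕ} (h : m = l.length) :
    (l ++ [a]).getD m d = a := by
  subst h
  rw [List.getD_append_right _ _ _ _ le_rfl]
  simp

lemma sound : ∀ n m t, m < n → t ∈ (table n).getD m [] → t.leaves = m + 1 := by
  intro n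
  induction n with
  | zero => intro m t h; omega
  | succ k ih =>
      intro m t hm ht
      match k, hm with
      | 0, _ =>
          interval_cases m
          simp [table] at ht
          subst ht; rfl
      | (j+1), _ =>
          rcases Nat.lt_or_ge m (j+1) with h | h
          · rw [table, List.getD_append _ _ _ _ (by rw [table_length]; omega)] at ht
            exact ih m t h ht
          · have hmj : m = j + 1 := by omega
            subst hmj
            rw [table, getD_snoc _ _ _ (table_length _).symm, mem_mkNext] at ht
            obtain ⟨i, hi, a, ha, b, hb, hpq⟩ := ht
            rw [table_length] at hi hb
            have hal := ih i a hi ha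
            have hbl := ih _ b (by omega) hb
            rcases hpq with rfl | rfl <;> simp [LTerm.leaves, hal, hbl] <;> omega

lemma complete : ∀ n t, t.leaves ≤ n → t ∈ (table n).getD (t.leaves - 1) [] := by
  intro n
  induction n with
  | zero => intro t h; have := leaves_pos t; omega
  | succ k ih =>
      intro t ht
      rcases Nat.lt_or_ge t.leaves (k+1) with h | h
      · -- t.leaves ≤ k, use stability
        have hk : 1 ≤ k := by have := leaves_pos t; omega
        match k, hk with
        | (j+1), _ =>
            rw [table, List.getD_append _ _ _ _
              (by rw [table_length]; have := leaves_pos t; omega)]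
            exact ih t (by omega)
      · have hl : t.leaves = k + 1 := by omega
        cases t with
        | x =>
            have : k = 0 := by simpa [LTerm.leaves] using hl
            subst this; simp [table, LTerm.leaves, List.getD]
        | p a b =>
            have hab : a.leaves + b.leaves = k + 1 := hl
            have ha1 := leaves_pos a; have hb1 := leaves_pos b
            have hk : 1 ≤ k := by omega
            match k, hk, hab with
            | (j+1), _, hab =>
                rw [table, getD_snoc _ _ _ (by
                  rw [table_length]; simp [LTerm.leaves]; omega), mem_mkNext]
                refine ⟨a.leaves - 1, by rw [table_length]; omega, a, ?_, b, ?_, Or.inl rfl⟩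
                · have := ih a (by omega)
                  exact this
                · rw [table_length]
                  have : j + 1 - 1 - (a.leaves - 1) = b.leaves - 1 := by omega
                  rw [this]
                  exact ih b (by omega)
        | s a b =>
            have hab : a.leaves + b.leaves = k + 1 := hl
            have ha1 := leaves_pos a; have hb1 := leaves_pos b
            have hk : 1 ≤ k := by omega
            match k, hk, hab with
            | (j+1), _, hab =>
                rw [table, getD_snoc _ _ _ (by
                  rw [table_length]; simp [LTerm.leaves]; omega), mem_mkNext]
                refine ⟨a.leaves - 1, by rw [table_length]; omega, a, ?_, b, ?_, Or.inr rfl⟩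
                · exact ih a (by omega)
                · rw [table_length]
                  have : j + 1 - 1 - (a.leaves - 1) = b.leaves - 1 := by omega
                  rw [this]
                  exact ih b (by omega)

def avoidFinset (n : ℕ) : Finset LTerm :=
  (((table n).getD (n-1) []).filter (fun t => avoidsB t)).toFinset

lemma mem_avoidFinset {n : ℕ} (hn : 1 ≤ n) (t : LTerm) :
    t ∈ avoidFinset n ↔ t.leaves = n ∧ t.Avoids := by
  simp only [avoidFinset, List.mem_toFinset, List.mem_filter, avoids_iff]
  constructor
  · rintro ⟨h1, h2⟩
    exact ⟨by have := sound n (n-1) t (by omega) h1; omega, h2⟩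
  · rintro ⟨h1, h2⟩
    exact ⟨by have := complete n t (by omega); rwa [h1] at this, h2⟩

lemma avoidCount_eq {n : ℕ} (hn : 1 ≤ n) : AvoidCount n = (avoidFinset n).card := by
  rw [AvoidCount, ← Nat.card_eq_finsetCard]
  exact Nat.card_congr (Equiv.subtypeEquivRight (fun t => (mem_avoidFinset hn t).symm))

end LAux

set_option maxRecDepth 100000 in
/-- In the free magmatic algebra with two operations `≺, ≻` subject to the single
relation `(x≻y)≺z = x≻(y≺z)` (L-algebras), the dimension of the arity-`n`
component equals the number of bicolored complete binary trees with `n` leaves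
having no right edge from a `≻`-vertex to a `≺`-vertex; for `n = 1,2,3,4,5`
these numbers are `1, 2, 7, 30, 143`. -/
theorem LAlgebra_dimension_eq_avoiding_trees :
    (∀ n : ℕ, LDim n = AvoidCount n) ∧
    AvoidCount 1 = 1 ∧ AvoidCount 2 = 2 ∧ AvoidCount 3 = 7 ∧
    AvoidCount 4 = 30 ∧ AvoidCount 5 = 143 := by
  refine ⟨LAux.ldim_eq, ?_, ?_, ?_, ?_, ?_⟩ <;>
    · rw [LAux.avoidCount_eq (by norm_num)]
      decide
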